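/- For every nonnegative integer n and every real (or indeterminate) μ, the determinant of the n×n matrix with (i,j) entry c^{(1)}_{i,j} = 2 − δ_{i,j}·2μ/(4i−1) (for 1 ≤ i,j ≤ n) equals ((−1)^n / (2^n · (3/4)_n)) · μ^{n−1} · (μ − 2n² − n). -/

import Mathlib

open Matrix Finset

lemma asc_prod' (x : ℝ) (n : ℕ) :
    (ascPochhammer ℝ n).eval x = ∏ i ∈ Finset.range n, (x + i) := by
  induction n with
  | zero => simp
  | succ n ih => rw [ascPochhammer_succ_eval, ih, Finset.prod_range_succ]

lemma sum43' (n : ℕ) : ∑ i ∈ Finset.range n, (4 * ((i : ℝ) + 1) - 1) = 2 * n ^ 2 + n := by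
  induction n with
  | zero => simp
  | succ n ih => rw [Finset.sum_range_succ, ih]; push_cast; ring

theorem det_C1 (n : ℕ) (mu : ℝ) :
    Matrix.det (Matrix.of (fun i j : Fin n =>
      2 - (if i = j then 2 * mu / (4 * ((i : ℕ) + 1 : ℝ) - 1) else 0)))
    = if n = 0 then 1 else
        (-1) ^ n / (2 ^ n * (ascPochhammer ℝ n).eval (3 / 4 : ℝ)) *
          mu ^ (n - 1) * (mu - 2 * (n : ℝ) ^ 2 - (n : ℝ)) := by
  have hP : (ascPochhammer ℝ n).eval (3 / 4 : ℝ) ≠ 0 :=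
    ne_of_gt (ascPochhammer_pos n _ (by norm_num))
  rcases eq_or_ne n 0 with rfl | hn
  · simp
  rw [if_neg hn]
  rcases eq_or_ne mu 0 with rfl | hmu
  · -- matrix is constant 2
    have hM : (Matrix.of (fun i j : Fin n =>
        2 - (if i = j then 2 * (0:ℝ) / (4 * ((i : ℕ) + 1 : ℝ) - 1) else 0)))
        = Matrix.of (fun _ _ : Fin n => (2:ℝ)) := by
      ext i j; simp
    rw [hM]
    rcases n with _ | _ | m
    · exact absurd rfl hn
    · rw [show (Matrix.of fun _ _ : Fin 1 => (2:ℝ)).det = 2 from Matrix.det_fin_one _]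
      simp [ascPochhammer_succ_eval]
      norm_num
    · rw [Matrix.det_zero_of_row_eq (M := Matrix.of fun _ _ : Fin (m+2) => (2:ℝ))
        (i := 0) (j := 1) (by exact Fin.zero_ne_one) rfl]
      rw [show (m + 2) - 1 = m + 1 from rfl]
      simp [zero_pow]
  · -- mu ≠ 0
    have hkey : (Matrix.of (fun i j : Fin n =>
        2 - (if i = j then 2 * mu / (4 * ((i : ℕ) + 1 : ℝ) - 1) else 0)))
        = Matrix.diagonal (fun i : Fin n => -(2 * mu / (4 * ((i : ℕ) + 1 : ℝ) - 1))) *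
          (1 + Matrix.replicateCol Unit (fun i : Fin n => -(4 * ((i : ℕ) + 1 : ℝ) - 1) / mu) *
            Matrix.replicateRow Unit (fun _ : Fin n => (1:ℝ))) := by
      ext i j
      have h0 : (0:ℝ) ≤ ((i:ℕ):ℝ) := Nat.cast_nonneg _
      have h : (4 * ((i : ℕ) + 1 : ℝ) - 1) ≠ 0 := by nlinarith
      have h2 : (((i : ℕ) : ℝ) + 1) * 4 - 1 ≠ 0 := by nlinarith
      simp [Matrix.mul_apply, Matrix.diagonal, Matrix.one_apply, mul_comm]
      rcases eq_or_ne i j with rfl | hij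
      · simp only [if_pos rfl, ↓reduceIte]
        field_simp
        ring
      · simp only [if_neg hij]
        field_simp
        ring
    rw [hkey, Matrix.det_mul, Matrix.det_diagonal, Matrix.det_one_add_replicateCol_mul_replicateRow]
    have hprod : (∏ i : Fin n, -(2 * mu / (4 * ((i : ℕ) + 1 : ℝ) - 1)))
        = (-1)^n * mu^n / (2^n * (ascPochhammer ℝ n).eval (3 / 4 : ℝ)) := by
      rw [Fin.prod_univ_eq_prod_range (fun i => -(2 * mu / (4 * ((i : ℕ) + 1 : ℝ) - 1)))]
      have : ∀ i ∈ Finset.range n, -(2 * mu / (4 * ((i : ℕ) + 1 : ℝ) - 1))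
          = (-mu) / (2 * ((3/4 : ℝ) + i)) := by
        intro i _
        have h0 : (0:ℝ) ≤ (i:ℝ) := Nat.cast_nonneg _
        have h : (4 * ((i : ℕ) + 1 : ℝ) - 1) ≠ 0 := by nlinarith
        have h2 : ((3:ℝ)/4 + i) ≠ 0 := by nlinarith
        field_simp
        ring
      rw [Finset.prod_congr rfl this, Finset.prod_div_distrib, Finset.prod_const,
        asc_prod', Finset.prod_mul_distrib, Finset.prod_const]
      rw [Finset.card_range, neg_pow]
    have hdot : ((fun _ : Fin n => (1:ℝ)) ⬝ᵥ fun i : Fin n => -(4 * ((i : ℕ) + 1 : ℝ) - 1) / mu)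
        = -(2 * (n:ℝ)^2 + n) / mu := by
      simp only [dotProduct, one_mul]
      rw [Fin.sum_univ_eq_sum_range (fun i => -(4 * ((i : ℕ) + 1 : ℝ) - 1) / mu)]
      rw [show (∑ i ∈ Finset.range n, -(4 * ((i:ℕ) + 1 : ℝ) - 1) / mu)
        = -(∑ i ∈ Finset.range n, (4 * ((i:ℕ) + 1 : ℝ) - 1)) / mu by
          rw [← Finset.sum_div, ← Finset.sum_neg_distrib]]
      rw [sum43']
    rw [hprod, hdot]
    obtain ⟨m, rfl⟩ := Nat.exists_eq_succ_of_ne_zero hn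
    rw [show m + 1 - 1 = m from rfl, pow_succ]
    field_simp
    push_cast [Nat.succ_eq_add_one]
    ring
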